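/- Let a₂ = √((t₁−x₁)² + (t₂−x₂)²) + √((t₁+x₁)² + (t₂+x₂)²) and b₂ = μ·(√((μt₁−x₁)² + (μt₂−x₂)²) + √((μt₁+x₁)² + (μt₂+x₂)²)) for reals t₁, t₂, x₁, x₂ and μ ∈ (0,1). If (t₁, t₂) ≠ (0,0) or (x₁, x₂) ≠ (0,0), then b₂ < a₂. -/

import Mathlib

/-- Strict shrinking inequality b₂ < a₂ for the Buzek–Hillery local cloner:
if (t₁,t₂) ≠ (0,0) or (x₁,x₂) ≠ (0,0) and μ ∈ (0,1), then
μ(√((μt₁−x₁)²+(μt₂−x₂)²)+√((μt₁+x₁)²+(μt₂+x₂)²)) <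
√((t₁−x₁)²+(t₂−x₂)²)+√((t₁+x₁)²+(t₂+x₂)²). -/
theorem strict_shrink_ineq (t₁ t₂ x₁ x₂ μ : ℝ) (hμ0 : 0 < μ) (hμ1 : μ < 1)
    (hne : (t₁, t₂) ≠ (0, 0) ∨ (x₁, x₂) ≠ (0, 0)) :
    μ * (Real.sqrt ((μ * t₁ - x₁) ^ 2 + (μ * t₂ - x₂) ^ 2) +
          Real.sqrt ((μ * t₁ + x₁) ^ 2 + (μ * t₂ + x₂) ^ 2)) <
      Real.sqrt ((t₁ - x₁) ^ 2 + (t₂ - x₂) ^ 2) +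
        Real.sqrt ((t₁ + x₁) ^ 2 + (t₂ + x₂) ^ 2) := by
  set z : ℂ := ⟨t₁, t₂⟩ with hz
  set w : ℂ := ⟨x₁, x₂⟩ with hw
  have habs : ∀ a b : ℝ, Real.sqrt (a ^ 2 + b ^ 2) = ‖(⟨a, b⟩ : ℂ)‖ := by
    intro a b
    rw [Complex.norm_def, Complex.normSq_mk]
    ring_nf
  have hzw1 : ((μ : ℂ) * z - w) = (⟨μ * t₁ - x₁, μ * t₂ - x₂⟩ : ℂ) := by
    apply Complex.ext <;> simp [hz, hw, Complex.ext_iff]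
  have hzw2 : ((μ : ℂ) * z + w) = (⟨μ * t₁ + x₁, μ * t₂ + x₂⟩ : ℂ) := by
    apply Complex.ext <;> simp [hz, hw, Complex.ext_iff]
  have hzw3 : (z - w) = (⟨t₁ - x₁, t₂ - x₂⟩ : ℂ) := by
    apply Complex.ext <;> simp [hz, hw]
  have hzw4 : (z + w) = (⟨t₁ + x₁, t₂ + x₂⟩ : ℂ) := by
    apply Complex.ext <;> simp [hz, hw]
  rw [habs, habs, habs, habs, ← hzw1, ← hzw2, ← hzw3, ← hzw4]
  set A := ‖z - w‖ with hA
  set B := ‖z + w‖ with hB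
  have hApos : 0 < A + B := by
    rcases eq_or_lt_of_le (add_nonneg (norm_nonneg (z - w)) (norm_nonneg (z + w))) with h | h
    · exfalso
      have hA0 : A = 0 := by
        have := norm_nonneg (z - w); have := norm_nonneg (z + w); linarith [hA, hB, h.symm]
      have hB0 : B = 0 := by
        have := norm_nonneg (z - w); linarith [h.symm]
      have h1 : z - w = 0 := by rwa [hA, norm_eq_zero] at hA0
      have h2 : z + w = 0 := by rwa [hB, norm_eq_zero] at hB0
      have hz0 : z = 0 := by
        have : (2 : ℂ) * z = 0 := by linear_combination h1 + h2
        simpa using this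
      have hw0 : w = 0 := by linear_combination hz0 - h1
      rcases hne with h | h
      · exact h (by simpa [Prod.ext_iff, hz, Complex.ext_iff] using hz0)
      · exact h (by simpa [Prod.ext_iff, hw, Complex.ext_iff] using hw0)
    · exact h
  have key : ‖(μ : ℂ) * z - w‖ + ‖(μ : ℂ) * z + w‖ ≤ A + B := by
    have e1 : (μ : ℂ) * z - w = ((1 + μ) / 2 : ℝ) * (z - w) + ((μ - 1) / 2 : ℝ) * (z + w) := by
      push_cast; ring
    have e2 : (μ : ℂ) * z + w = ((μ - 1) / 2 : ℝ) * (z - w) + ((μ + 1) / 2 : ℝ) * (z + w) := by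
      push_cast; ring
    have h1 : ‖(μ : ℂ) * z - w‖ ≤ (1 + μ) / 2 * A + (1 - μ) / 2 * B := by
      rw [e1]
      refine le_trans (norm_add_le _ _) ?_
      rw [norm_mul, norm_mul, Complex.norm_real, Complex.norm_real, Real.norm_eq_abs, Real.norm_eq_abs]
      have : |(1 + μ) / 2| = (1 + μ) / 2 := abs_of_pos (by linarith)
      have h2 : |(μ - 1) / 2| = (1 - μ) / 2 := by rw [abs_of_neg (by linarith)]; ring
      rw [this, h2]
    have h2 : ‖(μ : ℂ) * z + w‖ ≤ (1 - μ) / 2 * A + (1 + μ) / 2 * B := by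
      rw [e2]
      refine le_trans (norm_add_le _ _) ?_
      rw [norm_mul, norm_mul, Complex.norm_real, Complex.norm_real, Real.norm_eq_abs, Real.norm_eq_abs]
      have : |(μ - 1) / 2| = (1 - μ) / 2 := by rw [abs_of_neg (by linarith)]; ring
      have h2 : |(μ + 1) / 2| = (1 + μ) / 2 := by rw [abs_of_pos (by linarith)]; ring
      rw [this, h2]
    linarith
  calc μ * (‖(μ : ℂ) * z - w‖ + ‖(μ : ℂ) * z + w‖)
      ≤ μ * (A + B) := by
        apply mul_le_mul_of_nonneg_left key hμ0.le
    _ < 1 * (A + B) := by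
        apply mul_lt_mul_of_pos_right hμ1 hApos
    _ = A + B := one_mul _
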